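/- arXiv:2311.13909 — 2 statements merged into one kernel-verified Lean document; each statement's English description precedes it below -/
import Mathlib

section
/- The two-dimensional square-squeezing map σ*(x₁,x₂) = (x₁ - x₁x₂/2, x₂ - x₁x₂/2) maps the unit square [0,1]² onto the standard 2-simplex △₂ = {(u,v) : u ≥ 0, v ≥ 0, u + v ≤ 1}. -/
/-- The 2D square-squeezing map `σ*(x₁,x₂) = (x₁ - x₁x₂/2, x₂ - x₁x₂/2)`
maps the unit square `[0,1]²` onto the standard 2-simplex. -/
theorem square_squeezing_maps_onto_simplex :
    (fun p : ℝ × ℝ => (p.1 - p.1 * p.2 / 2, p.2 - p.1 * p.2 / 2)) ''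
      (Set.Icc 0 1 ×ˢ Set.Icc 0 1)
    = {q : ℝ × ℝ | 0 ≤ q.1 ∧ 0 ≤ q.2 ∧ q.1 + q.2 ≤ 1} := by
  ext ⟨u, v⟩
  simp only [Set.mem_image, Set.mem_prod, Set.mem_Icc, Set.mem_setOf_eq, Prod.exists,
    Prod.mk.injEq]
  constructor
  · rintro ⟨x, y, ⟨⟨hx0, hx1⟩, hy0, hy1⟩, hu, hv⟩
    refine ⟨?_, ?_, ?_⟩ <;> nlinarith
  · rintro ⟨hu, hv, huv⟩
    set D : ℝ := (2 + u - v) ^ 2 - 8 * u with hD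
    have hD0 : 0 ≤ D := by nlinarith [sq_nonneg (u - v), sq_nonneg (1 - u - v), mul_nonneg hu hv]
    set s : ℝ := Real.sqrt D with hs
    have hs0 : 0 ≤ s := Real.sqrt_nonneg _
    have hs2 : s ^ 2 = D := Real.sq_sqrt hD0
    have h1 : s ≤ 2 + u - v := by
      nlinarith [Real.sqrt_le_sqrt (show D ≤ (2 + u - v) ^ 2 by nlinarith),
        Real.sqrt_sq (show (0:ℝ) ≤ 2 + u - v by nlinarith)]
    have h2 : s ≤ 2 - u + v := by
      nlinarith [Real.sqrt_le_sqrt (show D ≤ (2 - u + v) ^ 2 by nlinarith),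
        Real.sqrt_sq (show (0:ℝ) ≤ 2 - u + v by nlinarith)]
    have h3 : u - v ≤ s := by
      rcases le_or_gt (u - v) 0 with h | h
      · linarith
      · nlinarith
    have h4 : v - u ≤ s := by
      rcases le_or_gt (v - u) 0 with h | h
      · linarith
      · nlinarith
    refine ⟨(2 + u - v - s) / 2, (2 - u + v - s) / 2, ⟨⟨by linarith, by linarith⟩,
      by linarith, by linarith⟩, by nlinarith, by nlinarith⟩
end

section
/- The two-dimensional square-squeezing map σ*(x₁,x₂) = (x₁ - x₁x₂/2, x₂ - x₁x₂/2) is injective on the unit square [0,1]². -/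
/-- The 2D square-squeezing map is injective on the unit square `[0,1]²`. -/
theorem square_squeezing_injOn :
    Set.InjOn (fun p : ℝ × ℝ => (p.1 - p.1 * p.2 / 2, p.2 - p.1 * p.2 / 2))
      (Set.Icc 0 1 ×ˢ Set.Icc 0 1) := by
  rintro ⟨a, b⟩ ⟨⟨ha0, ha1⟩, hb0, hb1⟩ ⟨c, d⟩ ⟨⟨hc0, hc1⟩, hd0, hd1⟩ heq
  simp only [Prod.mk.injEq] at heq ⊢
  obtain ⟨h1, h2⟩ := heq
  have hsub : a - b = c - d := by linarith
  have key : (a - c) * (a + d - 2) = 0 := by nlinarith [hsub]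
  have key2 : (a - c) * (b + c - 2) = 0 := by nlinarith [hsub]
  have hac : a = c := by
    by_contra hne
    have ht : a - c ≠ 0 := sub_ne_zero.mpr hne
    have e1 : a + d = 2 := by
      have := mul_eq_zero.mp key
      rcases this with h | h
      · exact absurd h ht
      · linarith
    have e2 : b + c = 2 := by
      have := mul_eq_zero.mp key2
      rcases this with h | h
      · exact absurd h ht
      · linarith
    have : a = 1 := by linarith
    have : c = 1 := by linarith
    apply hne; linarith
  refine ⟨hac, ?_⟩
  linarith [hsub]
end
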